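/- Let p be a prime, let F₁ = B(a₁, γ) \ U₁ and F₂ = B(a₂, γ') \ U₂ be two 'swiss cheeses' in ℤ, i.e., set differences of a ball and a finite union of balls, with outer-ball radii γ ≤ γ'. If F₁ ∩ F₂ ≠ ∅, then B(a₂, γ') ⊆ B(a₁, γ), and F₁ ∪ F₂ can be written as B(a₁, γ) minus a finite union of balls, each of which is contained in one of the holes of F₁ or F₂ (in fact each is an intersection of a hole of F₁ with a hole of F₂ or a hole of F₁ disjoint from B(a₂,γ')). -/

import Mathlib

def ball (p : ℕ) (a : ℤ) (γ : ℕ) : Set ℤ := {x : ℤ | (p : ℤ) ^ γ ∣ (x - a)}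

namespace SwissAux

lemma mem_ball {p : ℕ} {a x : ℤ} {γ : ℕ} : x ∈ ball p a γ ↔ (p:ℤ)^γ ∣ x - a := Iff.rfl

lemma ball_subset_of_le {p : ℕ} {a b : ℤ} {γ δ : ℕ} (h : γ ≤ δ)
    (hx : (ball p a γ ∩ ball p b δ).Nonempty) : ball p b δ ⊆ ball p a γ := by
  obtain ⟨x, hxa, hxb⟩ := hx
  intro y hy
  have h1 : (p:ℤ)^γ ∣ y - b := dvd_trans (pow_dvd_pow _ h) hy
  have h2 : (p:ℤ)^γ ∣ x - b := dvd_trans (pow_dvd_pow _ h) hxb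
  have hxa' : (p:ℤ)^γ ∣ x - a := hxa
  have heq : y - a = (y - b) - (x - b) + (x - a) := by ring
  show (p:ℤ)^γ ∣ y - a
  rw [heq]
  exact dvd_add (dvd_sub h1 h2) hxa'

lemma diff_eq {p : ℕ} (hp : 0 < p) (a b : ℤ) (γ δ : ℕ) (h : γ ≤ δ) :
    ball p a γ \ ball p b δ =
      ⋃ k ∈ (Finset.range (p^(δ-γ))).filter
        (fun k : ℕ => ¬ (p:ℤ)^δ ∣ (a + (k:ℤ)*(p:ℤ)^γ - b)),
        ball p (a + (k:ℤ)*(p:ℤ)^γ) δ := by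
  have hpow : (p:ℤ)^γ * (p:ℤ)^(δ-γ) = (p:ℤ)^δ := by
    rw [← pow_add, Nat.add_sub_cancel' h]
  ext x
  simp only [Set.mem_diff, Set.mem_iUnion, Finset.mem_filter, Finset.mem_range, exists_prop,
    mem_ball]
  constructor
  · rintro ⟨hxa, hxb⟩
    obtain ⟨m, hm⟩ := hxa
    set N : ℤ := (p:ℤ)^(δ-γ) with hN
    have hNpos : 0 < N := by positivity
    set k : ℤ := m % N with hk
    have hk0 : 0 ≤ k := Int.emod_nonneg m (ne_of_gt hNpos)
    have hklt : k < N := Int.emod_lt_of_pos m hNpos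
    have hdvd : N ∣ m - k := Int.dvd_self_sub_of_emod_eq rfl
    have hcast : ((k.toNat : ℕ) : ℤ) = k := Int.toNat_of_nonneg hk0
    have hNcast : ((p^(δ-γ) : ℕ) : ℤ) = N := by rw [hN]; push_cast; ring
    have hx' : (p:ℤ)^δ ∣ x - (a + k * (p:ℤ)^γ) := by
      obtain ⟨t, ht⟩ := hdvd
      have : x - (a + k * (p:ℤ)^γ) = (p:ℤ)^γ * (m - k) := by
        rw [show x - (a + k * (p:ℤ)^γ) = (x - a) - k * (p:ℤ)^γ by ring, hm]; ring
      rw [this, ht, ← hpow]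
      exact ⟨t, by ring⟩
    refine ⟨k.toNat, ⟨?_, ?_⟩, ?_⟩
    · have h2 := hklt
      rw [← hNcast] at h2
      omega
    · rw [hcast]
      intro hdb
      apply hxb
      have : x - b = (x - (a + k * (p:ℤ)^γ)) + (a + k * (p:ℤ)^γ - b) := by ring
      rw [this]
      exact dvd_add hx' hdb
    · rw [hcast]
      have : x - (a + k * (p:ℤ)^γ) = -(a + k * (p:ℤ)^γ - x) := by ring
      exact hx'
  · rintro ⟨k, ⟨hklt, hknd⟩, hxk⟩
    constructor
    · have h1 : (p:ℤ)^γ ∣ x - (a + (k:ℤ) * (p:ℤ)^γ) := dvd_trans (pow_dvd_pow _ h) hxk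
      have : x - a = (x - (a + (k:ℤ) * (p:ℤ)^γ)) + (k:ℤ) * (p:ℤ)^γ := by ring
      rw [this]
      exact dvd_add h1 ⟨k, by ring⟩
    · intro hxb
      apply hknd
      have : a + (k:ℤ) * (p:ℤ)^γ - b = (x - b) - (x - (a + (k:ℤ) * (p:ℤ)^γ)) := by ring
      rw [this]
      exact dvd_sub hxb hxk


def GoodUnion (p : ℕ) (Q : ℤ → ℕ → Prop) (T : Set ℤ) : Prop :=
  ∃ L : List (ℤ × ℕ), T = (⋃ q ∈ L, ball p q.1 q.2) ∧ ∀ q ∈ L, Q q.1 q.2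

namespace GoodUnion

variable {p : ℕ} {Q Q' : ℤ → ℕ → Prop} {T T₁ T₂ : Set ℤ}

lemma empty : GoodUnion p Q ∅ := ⟨[], by simp, by simp⟩

lemma single {a : ℤ} {γ : ℕ} (hQ : Q a γ) : GoodUnion p Q (ball p a γ) :=
  ⟨[(a, γ)], by simp, by simp [hQ]⟩

lemma union (h₁ : GoodUnion p Q T₁) (h₂ : GoodUnion p Q T₂) : GoodUnion p Q (T₁ ∪ T₂) := by
  obtain ⟨L₁, hL₁, hQ₁⟩ := h₁
  obtain ⟨L₂, hL₂, hQ₂⟩ := h₂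
  refine ⟨L₁ ++ L₂, ?_, ?_⟩
  · rw [hL₁, hL₂]
    ext x
    simp only [Set.mem_iUnion, Set.mem_union, exists_prop, List.mem_append]
    constructor
    · rintro (⟨q, hq, hx⟩ | ⟨q, hq, hx⟩)
      exacts [⟨q, Or.inl hq, hx⟩, ⟨q, Or.inr hq, hx⟩]
    · rintro ⟨q, hq | hq, hx⟩
      exacts [Or.inl ⟨q, hq, hx⟩, Or.inr ⟨q, hq, hx⟩]
  · intro q hq
    rcases List.mem_append.mp hq with h | h
    · exact hQ₁ q h
    · exact hQ₂ q h

lemma mono (h : GoodUnion p Q T) (hQQ : ∀ c ε, Q c ε → Q' c ε) : GoodUnion p Q' T := by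
  obtain ⟨L, hL, hQ⟩ := h
  exact ⟨L, hL, fun q hq => hQQ _ _ (hQ q hq)⟩

lemma biUnion {ι : Type*} [DecidableEq ι] (s : Finset ι) (f : ι → Set ℤ)
    (h : ∀ i ∈ s, GoodUnion p Q (f i)) : GoodUnion p Q (⋃ i ∈ s, f i) := by
  induction s using Finset.induction_on with
  | empty => simpa using (empty : GoodUnion p Q ∅)
  | @insert a s ha ih =>
    rw [Finset.set_biUnion_insert]
    exact (h a (s.mem_insert_self a)).union (ih (fun i hi => h i (Finset.mem_insert_of_mem hi)))

lemma iUnionFin {n : ℕ} (f : Fin n → Set ℤ)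
    (h : ∀ i, GoodUnion p Q (f i)) : GoodUnion p Q (⋃ i, f i) := by
  have heq : (⋃ i, f i) = ⋃ i ∈ (Finset.univ : Finset (Fin n)), f i := by simp
  rw [heq]
  exact biUnion _ _ (fun i _ => h i)

end GoodUnion

lemma diff_good {p : ℕ} (hp : 0 < p) (a b : ℤ) (γ δ : ℕ) :
    GoodUnion p (fun c ε => ball p c ε ⊆ ball p a γ) (ball p a γ \ ball p b δ) := by
  rcases le_or_gt γ δ with h | h
  · rw [diff_eq hp a b γ δ h]
    apply GoodUnion.biUnion
    intro k _
    apply GoodUnion.single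
    apply ball_subset_of_le h
    exact ⟨a + (k:ℤ) * (p:ℤ)^γ, ⟨(k:ℤ), by ring⟩, ⟨0, by ring⟩⟩
  · by_cases hd : (p:ℤ)^δ ∣ a - b
    · have hsub : ball p a γ ⊆ ball p b δ :=
        ball_subset_of_le h.le ⟨a, hd, ⟨0, by ring⟩⟩
      rw [Set.diff_eq_empty.mpr hsub]
      exact GoodUnion.empty
    · have hdisj : ball p a γ \ ball p b δ = ball p a γ := by
        ext x
        simp only [Set.mem_diff, and_iff_left_iff_imp]
        intro hxa hxb
        apply hd
        have heq : a - b = (x - b) - (x - a) := by ring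
        rw [heq]
        exact dvd_sub hxb (dvd_trans (pow_dvd_pow _ h.le) hxa)
      rw [hdisj]
      exact GoodUnion.single (subset_refl _)

lemma inter_good {p : ℕ} (c₁ c₂ : ℤ) (ε₁ ε₂ : ℕ) :
    GoodUnion p (fun c ε => ball p c ε ⊆ ball p c₁ ε₁ ∧ ball p c ε ⊆ ball p c₂ ε₂)
      (ball p c₁ ε₁ ∩ ball p c₂ ε₂) := by
  by_cases hne : (ball p c₁ ε₁ ∩ ball p c₂ ε₂).Nonempty
  · rcases le_total ε₁ ε₂ with h | h
    · have hsub := ball_subset_of_le h hne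
      rw [Set.inter_eq_self_of_subset_right hsub]
      exact GoodUnion.single ⟨hsub, subset_refl _⟩
    · have hsub := ball_subset_of_le h (by rwa [Set.inter_comm] at hne)
      rw [Set.inter_eq_self_of_subset_left hsub]
      exact GoodUnion.single ⟨subset_refl _, hsub⟩
  · rw [Set.not_nonempty_iff_eq_empty.mp hne]
    exact GoodUnion.empty

end SwissAux
/-- If two swiss cheeses F₁ = B(a₁,γ) \ ⋃ holes and F₂ = B(a₂,γ') \ ⋃ holes,
with γ ≤ γ', intersect, then B(a₂,γ') ⊆ B(a₁,γ) and F₁ ∪ F₂ is again a swiss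
cheese with outer ball B(a₁,γ), whose holes are each contained in a hole of
F₁ or of F₂. -/
theorem union_of_cheeses (p : ℕ) (hp : p.Prime)
    (a₁ a₂ : ℤ) (γ γ' : ℕ) (hγ : γ ≤ γ')
    (n₁ n₂ : ℕ) (b₁ : Fin n₁ → ℤ) (δ₁ : Fin n₁ → ℕ)
    (b₂ : Fin n₂ → ℤ) (δ₂ : Fin n₂ → ℕ)
    (hne : ((ball p a₁ γ \ ⋃ i, ball p (b₁ i) (δ₁ i)) ∩
            (ball p a₂ γ' \ ⋃ i, ball p (b₂ i) (δ₂ i))).Nonempty) :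
    ball p a₂ γ' ⊆ ball p a₁ γ ∧
    ∃ (n : ℕ) (c : Fin n → ℤ) (ε : Fin n → ℕ),
      (ball p a₁ γ \ ⋃ i, ball p (b₁ i) (δ₁ i)) ∪
        (ball p a₂ γ' \ ⋃ i, ball p (b₂ i) (δ₂ i))
        = ball p a₁ γ \ ⋃ j, ball p (c j) (ε j) ∧
      ∀ j, (∃ i, ball p (c j) (ε j) ⊆ ball p (b₁ i) (δ₁ i)) ∨
           (∃ i, ball p (c j) (ε j) ⊆ ball p (b₂ i) (δ₂ i)) := by
  obtain ⟨x, ⟨hx1, _⟩, hx2, _⟩ := hne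
  have hsub : ball p a₂ γ' ⊆ ball p a₁ γ :=
    SwissAux.ball_subset_of_le hγ ⟨x, hx1, hx2⟩
  refine ⟨hsub, ?_⟩
  have hp0 : 0 < p := hp.pos
  set Q : ℤ → ℕ → Prop := fun c ε =>
    (∃ i, ball p c ε ⊆ ball p (b₁ i) (δ₁ i)) ∨
    (∃ i, ball p c ε ⊆ ball p (b₂ i) (δ₂ i)) with hQ
  have hg : SwissAux.GoodUnion p Q
      (((⋃ i, ball p (b₁ i) (δ₁ i)) \ ball p a₂ γ') ∪
       ((⋃ i, ball p (b₁ i) (δ₁ i)) ∩ (⋃ i, ball p (b₂ i) (δ₂ i)))) := by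
    apply SwissAux.GoodUnion.union
    · rw [Set.iUnion_diff]
      apply SwissAux.GoodUnion.iUnionFin
      intro i
      exact (SwissAux.diff_good hp0 (b₁ i) a₂ (δ₁ i) γ').mono
        (fun c ε hc => Or.inl ⟨i, hc⟩)
    · rw [Set.iUnion_inter]
      apply SwissAux.GoodUnion.iUnionFin
      intro i
      rw [Set.inter_iUnion]
      apply SwissAux.GoodUnion.iUnionFin
      intro j
      exact (SwissAux.inter_good (b₁ i) (b₂ j) (δ₁ i) (δ₂ j)).mono
        (fun c ε hc => Or.inl ⟨i, hc.1⟩)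
  obtain ⟨L, hL1, hL2⟩ := hg
  refine ⟨L.length, fun j => (L.get j).1, fun j => (L.get j).2, ?_, ?_⟩
  · have hU : (⋃ j, ball p (L.get j).1 (L.get j).2) = ⋃ q ∈ L, ball p q.1 q.2 := by
      ext y
      simp only [Set.mem_iUnion, exists_prop]
      constructor
      · rintro ⟨j, hj⟩
        exact ⟨L.get j, L.get_mem j, hj⟩
      · rintro ⟨q, hq, hy⟩
        obtain ⟨j, rfl⟩ := List.mem_iff_get.mp hq
        exact ⟨j, hy⟩
    rw [hU, ← hL1]
    ext y
    have hy := @hsub y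
    simp only [Set.mem_union, Set.mem_diff, Set.mem_inter_iff]
    tauto
  · intro j
    exact hL2 _ (L.get_mem j)
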